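/- Fix real constants k > 0, g > 0, μ₊ > 0, μ₋ > 0, ρ₊ > 0, ρ₋ > 0 and γ_w ≥ 0, γ_d ≥ 0, and assume g(ρ₋−ρ₊) + γ_w > 0. With λ1f, λ2f, λ1h, λ2h as below, define Λ±(m) = (λ1f(m)+λ2h(m) ± √((λ1f(m)−λ2h(m))² + 4·λ1h(m)·λ2f(m)))/2 for integers m ≥ 1 (real square root). Then there exists a real number ω > 0 such that Λ₊(m) ≤ −ω and Λ₋(m) ≤ −ω for every integer m ≥ 1. -/

import Mathlib

private lemma aux_cosh_le_two_sinh {t : ℝ} (ht : 1 ≤ t) :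
    Real.cosh t ≤ 2 * Real.sinh t := by
  have h3 : (3:ℝ) ≤ Real.exp t * Real.exp t := by
    have h1 := Real.add_one_le_exp (2 * t)
    have h2 : Real.exp (2 * t) = Real.exp t * Real.exp t := by
      rw [two_mul, Real.exp_add]
    linarith
  have he : Real.exp (-t) * Real.exp t = 1 := by
    rw [← Real.exp_add]; simp
  rw [Real.cosh_eq, Real.sinh_eq]
  nlinarith [Real.exp_pos t, Real.exp_pos (-t)]

set_option maxHeartbeats 1600000

/-- In the stable regime `g(ρ₋−ρ₊) + γ_w > 0`, the spectrum of the linearized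
two-phase Muskat operator is uniformly bounded away from the imaginary axis:
there is `ω > 0` with `Λ₊(m) ≤ −ω` and `Λ₋(m) ≤ −ω` for all `m ≥ 1`. -/
theorem stmt_9
    (k g μp μm ρp ρm γw γd : ℝ)
    (hk : 0 < k) (hg : 0 < g) (hμp : 0 < μp) (hμm : 0 < μm)
    (hρp : 0 < ρp) (hρm : 0 < ρm) (hγw : 0 ≤ γw) (hγd : 0 ≤ γd)
    (l1f l2f l1h l2h : ℕ → ℝ)
    (h1f : ∀ m : ℕ, 1 ≤ m → l1f m =
      -((g * (ρm - ρp) + γw * (m : ℝ) ^ 2) * (k * m) / ((μp + μm) * Real.tanh m)))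
    (h2f : ∀ m : ℕ, 1 ≤ m → l2f m =
      -((g * (ρm - ρp) + γw * (m : ℝ) ^ 2) * (k * m) / ((μp + μm) * Real.sinh m)))
    (h1h : ∀ m : ℕ, 1 ≤ m → l1h m =
      -((g * ρp + γd * (m : ℝ) ^ 2) * (k * m) / ((μp + μm) * Real.sinh m)))
    (h2h : ∀ m : ℕ, 1 ≤ m → l2h m =
      -((g * ρp + γd * (m : ℝ) ^ 2) * (k * m / (μp + μm)) *
        ((μm * (Real.cosh m ^ 2 - 1) + μp * Real.cosh m ^ 2) /
          (μp * Real.sinh m * Real.cosh m))))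
    (hstab : 0 < g * (ρm - ρp) + γw) :
    ∃ ω : ℝ, 0 < ω ∧ ∀ m : ℕ, 1 ≤ m →
      (l1f m + l2h m +
        Real.sqrt ((l1f m - l2h m) ^ 2 + 4 * l1h m * l2f m)) / 2 ≤ -ω ∧
      (l1f m + l2h m -
        Real.sqrt ((l1f m - l2h m) ^ 2 + 4 * l1h m * l2f m)) / 2 ≤ -ω := by
  have hν : (0:ℝ) < μp + μm := by linarith
  obtain ⟨P1, hP1def⟩ : ∃ x : ℝ, x = (g * (ρm - ρp) + γw) * k / (μp + μm) := ⟨_, rfl⟩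
  obtain ⟨Q1, hQ1def⟩ : ∃ x : ℝ, x = g * ρp * k / (μp + μm) := ⟨_, rfl⟩
  have hP1 : 0 < P1 := by rw [hP1def]; positivity
  have hQ1 : 0 < Q1 := by rw [hQ1def]; positivity
  obtain ⟨M0, hM0def⟩ : ∃ x : ℝ, x = min P1 Q1 := ⟨_, rfl⟩
  have hM0 : 0 < M0 := by rw [hM0def]; exact lt_min hP1 hQ1
  have hM0P1 : M0 ≤ P1 := by rw [hM0def]; exact min_le_left _ _
  have hM0Q1 : M0 ≤ Q1 := by rw [hM0def]; exact min_le_right _ _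
  clear hM0def
  obtain ⟨C0, hC0def⟩ : ∃ x : ℝ, x = μm / μp + 2 := ⟨_, rfl⟩
  have hC0 : 2 ≤ C0 := by
    have h : 0 ≤ μm / μp := by positivity
    rw [hC0def]; linarith
  have hC0pos : 0 < C0 := by linarith
  refine ⟨M0 / (2 * C0), by positivity, ?_⟩
  intro m hm
  obtain ⟨ω, hωdef⟩ : ∃ x : ℝ, x = M0 / (2 * C0) := ⟨_, rfl⟩
  rw [← hωdef]
  have e1 := h1f m hm
  have e2 := h2f m hm
  have e3 := h1h m hm
  have e4 := h2h m hm
  clear h1f h2f h1h h2h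
  have hω0 : 0 < ω := by rw [hωdef]; positivity
  have hωC : 2 * C0 * ω = M0 := by rw [hωdef]; field_simp
  have hωM0 : ω ≤ M0 / 4 := by
    rw [hωdef, div_le_div_iff₀ (by positivity) (by norm_num)]
    have h := mul_le_mul_of_nonneg_left hC0 hM0.le
    linarith only [h]
  set t : ℝ := (m : ℝ) with htdef
  have ht : 1 ≤ t := by rw [htdef]; exact_mod_cast hm
  have ht0 : 0 < t := by linarith
  set s : ℝ := Real.sinh t with hsdef
  set c : ℝ := Real.cosh t with hcdef
  have hs0 : 0 < s := Real.sinh_pos_iff.mpr ht0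
  have hc0 : 0 < c := Real.cosh_pos t
  have hc1 : 1 ≤ c := Real.one_le_cosh t
  have hs1 : 1 ≤ s := le_trans ht (Real.self_le_sinh_iff.mpr ht0.le)
  have hc2 : c ^ 2 = s ^ 2 + 1 := Real.cosh_sq t
  have hsc : s ≤ c := by
    by_contra hcon
    push_neg at hcon
    have h3 : 0 < (s - c) * (s + c) := mul_pos (by linarith) (by linarith)
    nlinarith only [h3, hc2]
  clear_value t
  have hc2s : c ≤ 2 * s := aux_cosh_le_two_sinh ht
  -- abbreviations
  have ht2 : (1:ℝ) ≤ t ^ 2 := by nlinarith only [ht, sq_nonneg (t - 1)]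
  have hnum : 0 < g * (ρm - ρp) + γw * t ^ 2 := by
    have h := mul_le_mul_of_nonneg_left ht2 hγw
    linarith
  obtain ⟨P, hPdef⟩ : ∃ x : ℝ, x = (g * (ρm - ρp) + γw * t ^ 2) * (k * t) / (μp + μm) := ⟨_, rfl⟩
  obtain ⟨Q, hQdef⟩ : ∃ x : ℝ, x = (g * ρp + γd * t ^ 2) * (k * t) / (μp + μm) := ⟨_, rfl⟩
  have hP0 : 0 < P := by rw [hPdef]; positivity
  have hQ0 : 0 < Q := by
    rw [hQdef]
    have h : 0 < g * ρp + γd * t ^ 2 := by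
      have h2 := mul_le_mul_of_nonneg_left ht2 hγd
      have h3 := mul_pos hg hρp
      linarith only [h2, h3, hγd]
    positivity
  have hM0P : M0 ≤ P := by
    have key : (g * (ρm - ρp) + γw) * k ≤ (g * (ρm - ρp) + γw * t ^ 2) * (k * t) := by
      have s1 : g * (ρm - ρp) + γw ≤ g * (ρm - ρp) + γw * t ^ 2 := by
        have h := mul_le_mul_of_nonneg_left ht2 hγw
        linarith
      have s2 : (g * (ρm - ρp) + γw) * k ≤ (g * (ρm - ρp) + γw * t ^ 2) * k :=
        mul_le_mul_of_nonneg_right s1 hk.le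
      have s3 : (g * (ρm - ρp) + γw * t ^ 2) * k ≤ ((g * (ρm - ρp) + γw * t ^ 2) * k) * t :=
        le_mul_of_one_le_right (by positivity) ht
      calc (g * (ρm - ρp) + γw) * k ≤ (g * (ρm - ρp) + γw * t ^ 2) * k := s2
        _ ≤ ((g * (ρm - ρp) + γw * t ^ 2) * k) * t := s3
        _ = (g * (ρm - ρp) + γw * t ^ 2) * (k * t) := by ring
    have h1 : P1 ≤ P := by
      rw [hP1def, hPdef]
      exact (div_le_div_iff_of_pos_right hν).mpr key
    exact le_trans hM0P1 h1
  have hM0Q : M0 ≤ Q := by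
    have hb : 0 < g * ρp + γd * t ^ 2 := by
      have h2 := mul_le_mul_of_nonneg_left ht2 hγd
      have h3 := mul_pos hg hρp
      linarith only [h2, h3, hγd]
    have key : g * ρp * k ≤ (g * ρp + γd * t ^ 2) * (k * t) := by
      have s1 : g * ρp ≤ g * ρp + γd * t ^ 2 := by
        have h := mul_le_mul_of_nonneg_left ht2 hγd
        linarith only [h, hγd]
      have s2 : g * ρp * k ≤ (g * ρp + γd * t ^ 2) * k :=
        mul_le_mul_of_nonneg_right s1 hk.le
      have s3 : (g * ρp + γd * t ^ 2) * k ≤ ((g * ρp + γd * t ^ 2) * k) * t :=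
        le_mul_of_one_le_right (by positivity) ht
      calc g * ρp * k ≤ (g * ρp + γd * t ^ 2) * k := s2
        _ ≤ ((g * ρp + γd * t ^ 2) * k) * t := s3
        _ = (g * ρp + γd * t ^ 2) * (k * t) := by ring
    have h1 : Q1 ≤ Q := by
      rw [hQ1def, hQdef]
      exact (div_le_div_iff_of_pos_right hν).mpr key
    exact le_trans hM0Q1 h1
  -- formulas for entries
  have hA : l1f m = -(P * c / s) := by
    rw [e1, Real.tanh_eq_sinh_div_cosh, ← hsdef, ← hcdef, hPdef]
    field_simp
  have hC : l2f m = -(P / s) := by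
    rw [e2, hPdef]
    field_simp
  have hB : l1h m = -(Q / s) := by
    rw [e3, hQdef]
    field_simp
  have hD : l2h m = -(Q * ((μm + μp) * s ^ 2 + μp) / (μp * s * c)) := by
    rw [e4, hQdef]
    have hcs : c ^ 2 - 1 = s ^ 2 := by linarith [hc2]
    rw [hcs]
    field_simp
    ring_nf
    linear_combination (-μp) * hc2
  clear e1 e2 e3 e4 hm ht2 hnum
  clear_value s c
  -- entry bounds
  have hAle : l1f m ≤ -P := by
    rw [hA, neg_le_neg_iff, le_div_iff₀ hs0]
    exact mul_le_mul_of_nonneg_left hsc hP0.le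
  have hAge : -(C0 * P) ≤ l1f m := by
    rw [hA, neg_le_neg_iff, div_le_iff₀ hs0, hC0def]
    have h1 : P * c ≤ P * (2 * s) := mul_le_mul_of_nonneg_left hc2s hP0.le
    have h2 : 0 ≤ μm / μp * P * s := by positivity
    linarith only [h1, h2]
  have hDle : l2h m ≤ -Q := by
    rw [hD, neg_le_neg_iff, le_div_iff₀ (by positivity)]
    have hc2' : μp * c ^ 2 = μp * s ^ 2 + μp := by linear_combination μp * hc2
    have key : μp * s * c ≤ (μm + μp) * s ^ 2 + μp := by
      linarith only [mul_nonneg hμp.le (sq_nonneg (s - c)),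
        mul_nonneg hμm.le (sq_nonneg s), hc2', hμp.le]
    have h4 := mul_le_mul_of_nonneg_left key hQ0.le
    linarith only [h4]
  have hDge : -(C0 * Q) ≤ l2h m := by
    rw [hD, neg_le_neg_iff, div_le_iff₀ (by positivity), hC0def]
    have hsc1 : (1:ℝ) ≤ s * c := by
      have h := mul_le_mul hs1 hc1 zero_le_one (le_trans zero_le_one hs1)
      linarith only [h]
    have key2 : (μm + μp) * s ^ 2 + μp ≤ (μm + 2 * μp) * (s * c) := by
      have h1 : (μm + μp) * s * s ≤ (μm + μp) * s * c :=
        mul_le_mul_of_nonneg_left hsc (by positivity)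
      have h2 : μp * 1 ≤ μp * (s * c) := mul_le_mul_of_nonneg_left hsc1 hμp.le
      linarith only [h1, h2]
    have eq1 : (μm / μp + 2) * Q * (μp * s * c) = Q * ((μm + 2 * μp) * (s * c)) := by
      field_simp
    rw [eq1]
    exact mul_le_mul_of_nonneg_left key2 hQ0.le
  -- determinant
  have hE : l1f m * l2h m - l1h m * l2f m = P * Q * ((μm + μp) / μp) := by
    rw [hA, hB, hC, hD]
    field_simp
    ring
  have hdet : P * Q ≤ l1f m * l2h m - l1h m * l2f m := by
    rw [hE]
    have h1 : (1:ℝ) ≤ (μm + μp) / μp := by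
      rw [le_div_iff₀ hμp]; linarith
    exact le_mul_of_one_le_right (by positivity) h1
  clear hA hB hC hD hE
  -- trace bounds
  have hT : l1f m + l2h m ≤ -(P + Q) := by linarith
  have hTge : -(C0 * (P + Q)) ≤ l1f m + l2h m := by
    linarith only [hAge, hDge]
  -- sqrt bound
  have hynn : 0 ≤ -(l1f m + l2h m) - 2 * ω := by
    have h : 2 * M0 ≤ P + Q := by linarith
    linarith
  have h1 : ω * (-(l1f m + l2h m)) ≤ ω * (C0 * (P + Q)) :=
    mul_le_mul_of_nonneg_left (by linarith) hω0.le
  have h2 : ω * (C0 * (P + Q)) = M0 * (P + Q) / 2 := by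
    rw [hωdef]; field_simp
  have h3 : M0 * (P + Q) / 2 ≤ P * Q := by
    have hp1 : M0 * P ≤ Q * P := mul_le_mul_of_nonneg_right hM0Q hP0.le
    have hp2 : M0 * Q ≤ P * Q := mul_le_mul_of_nonneg_right hM0P hQ0.le
    linarith only [hp1, hp2]
  have hy : (l1f m - l2h m) ^ 2 + 4 * l1h m * l2f m ≤ (-(l1f m + l2h m) - 2 * ω) ^ 2 := by
    have expand : (-(l1f m + l2h m) - 2 * ω) ^ 2 - ((l1f m - l2h m) ^ 2 + 4 * l1h m * l2f m)
        = 4 * ((l1f m * l2h m - l1h m * l2f m) + ω * (-(l1f m + l2h m)) * (-1) + ω ^ 2) := by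
      ring
    linarith only [expand, h1, h2, h3, hdet, sq_nonneg ω]
  have hsq : Real.sqrt ((l1f m - l2h m) ^ 2 + 4 * l1h m * l2f m) ≤ -(l1f m + l2h m) - 2 * ω := by
    calc Real.sqrt ((l1f m - l2h m) ^ 2 + 4 * l1h m * l2f m)
        ≤ Real.sqrt ((-(l1f m + l2h m) - 2 * ω) ^ 2) := Real.sqrt_le_sqrt hy
      _ = -(l1f m + l2h m) - 2 * ω := Real.sqrt_sq hynn
  constructor
  · linarith
  · have hnn := Real.sqrt_nonneg ((l1f m - l2h m) ^ 2 + 4 * l1h m * l2f m)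
    have h : 2 * M0 ≤ P + Q := by linarith
    linarith
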